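/- Let f be an extended strategy function for a tree T=(V,E) with cost function ω. Then there is exactly one vertex q ∈ V whose interval f(q)=[a,b) attains the maximum right endpoint, i.e., with sup f(q) = max_{v∈V} sup f(v). -/

import Mathlib

universe u

/-- A half-open interval `[a, b)` with integer endpoints `0 ≤ a < b`. -/
structure HInterval : Type where
  a : ℕ
  b : ℕ
  hab : a < b

namespace HInterval

/-- The interval `[a, b)` as a set of naturals. -/
def toSet (I : HInterval) : Set ℕ := Set.Ico I.a I.b

/-- The length `|[a,b)| = b - a` of an interval. -/
def len (I : HInterval) : ℕ := I.b - I.a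

/-- `I < J` for intervals `I = [a,b)`, `J = [a',b')`: it means `b ≤ a'`. -/
def Lt (I J : HInterval) : Prop := I.b ≤ J.a

/-- `K > I ∪ J`: the interval `K` lies entirely above both `I` and `J`. -/
def GtUnion (K I J : HInterval) : Prop := I.b ≤ K.a ∧ J.b ≤ K.a

/-- The interval shifted by a constant `c`, i.e. `[a+c, b+c)`. -/
def shift (I : HInterval) (c : ℕ) : HInterval :=
  ⟨I.a + c, I.b + c, by have := I.hab; omega⟩

end HInterval

variable {V : Type u}

/-- `v` lies on the path between `r` and `u` in `G` (when `G` is a tree,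
the path between any two vertices is unique). -/
def OnPath (G : SimpleGraph V) (r u v : V) : Prop :=
  ∀ p : G.Walk r u, p.IsPath → v ∈ p.support

/-- An extended strategy function for `(G, ω)`: it assigns to each vertex `v` an
interval of length at least `ω v` such that, whenever the intervals of two distinct
vertices intersect, the path connecting them contains a vertex whose interval lies
above the union of the two intervals. -/
def IsESF (G : SimpleGraph V) (ω : V → ℝ) (f : V → HInterval) : Prop :=
  (∀ v, ω v ≤ ((f v).len : ℝ)) ∧
  ∀ v₁ v₂ : V, v₁ ≠ v₂ → ((f v₁).toSet ∩ (f v₂).toSet).Nonempty →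
    ∀ p : G.Walk v₁ v₂, p.IsPath →
      ∃ v₃ ∈ p.support, (f v₃).GtUnion (f v₁) (f v₂)

/-- `sup ⋃_{v ∈ V} f(v)`: the supremum of the union of all assigned intervals. -/
noncomputable def supEnd [Fintype V] (f : V → HInterval) : ℕ :=
  Finset.univ.sup fun v => (f v).b

/-- An extended strategy function is optimal if the supremum of the union of its
intervals is minimal among all extended strategy functions for `(G, ω)`. -/
def IsOptimalESF [Fintype V] (G : SimpleGraph V) (ω : V → ℝ) (f : V → HInterval) : Prop :=
  IsESF G ω f ∧ ∀ g : V → HInterval, IsESF G ω g → supEnd f ≤ supEnd g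

/-- `u` is screening `v`: `u` is the only vertex `x` on the path connecting `v`
and `u` with `f v < f x`. -/
def Screens (G : SimpleGraph V) (f : V → HInterval) (v u : V) : Prop :=
  ∀ p : G.Walk v u, p.IsPath → ∀ x ∈ p.support, ((f v).Lt (f x) ↔ x = u)

/-- `u` belongs to the screening neighborhood `N(v)` of `v`: `u` is `v` itself, or
`u` is screening `v`, or the path connecting `u` and `v` has no vertex screening `v`. -/
def InScrNbhd (G : SimpleGraph V) (f : V → HInterval) (v u : V) : Prop :=
  u = v ∨ Screens G f v u ∨
    ∀ p : G.Walk u v, p.IsPath → ∀ x ∈ p.support, ¬ Screens G f v x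

/-- `u` is visible from `v`: no vertex `x` on the path connecting `u` and `v`
satisfies `f u < f x`. -/
def Visible (G : SimpleGraph V) (f : V → HInterval) (u v : V) : Prop :=
  ∀ p : G.Walk u v, p.IsPath → ∀ x ∈ p.support, ¬ (f u).Lt (f x)

/-- The vertex `u` is aligned w.r.t. `f` and `ω` if both endpoints of `f u`
are integer multiples of `ω u`. -/
def AlignedAt (ω : V → ℝ) (f : V → HInterval) (u : V) : Prop :=
  (∃ m : ℕ, ((f u).a : ℝ) = m * ω u) ∧ (∃ m : ℕ, ((f u).b : ℝ) = m * ω u)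

/-- An extended strategy function on the subgraph of `G` induced by the vertex set `A`. -/
def IsESFOn (G : SimpleGraph V) (ω : V → ℝ) (f : V → HInterval) (A : Set V) : Prop :=
  (∀ v ∈ A, ω v ≤ ((f v).len : ℝ)) ∧
  ∀ v₁ ∈ A, ∀ v₂ ∈ A, v₁ ≠ v₂ → ((f v₁).toSet ∩ (f v₂).toSet).Nonempty →
    ∀ p : G.Walk v₁ v₂, p.IsPath → (∀ x ∈ p.support, x ∈ A) →
      ∃ v₃ ∈ p.support, (f v₃).GtUnion (f v₁) (f v₂)

/-- Let `f` be an extended strategy function for a tree `T = (V,E)`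
with positive cost function `ω`. Then there is exactly one vertex `q ∈ V` whose interval
attains the maximum right endpoint, i.e. with `sup f(q) = max_{v ∈ V} sup f(v)`. -/
theorem stmt5 {V : Type u} [Fintype V] (G : SimpleGraph V) (hG : G.IsTree)
    (ω : V → ℝ) (hω : ∀ v, 0 < ω v)
    (f : V → HInterval) (hf : IsESF G ω f) :
    ∃! q : V, ∀ v : V, (f v).b ≤ (f q).b := by
  classical
  have hne : Nonempty V := hG.isConnected.nonempty
  obtain ⟨q, -, hq⟩ := Finset.exists_max_image Finset.univ (fun v => (f v).b)
    ⟨Classical.arbitrary V, Finset.mem_univ _⟩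
  refine ⟨q, fun v => hq v (Finset.mem_univ v), ?_⟩
  intro y hy
  by_contra hne'
  have hb : (f y).b = (f q).b := le_antisymm (hq y (Finset.mem_univ y)) (hy q)
  have h1 := (f y).hab
  have h2 := (f q).hab
  have hint : ((f y).toSet ∩ (f q).toSet).Nonempty := by
    refine ⟨(f q).b - 1, ?_, ?_⟩ <;> simp only [HInterval.toSet, Set.mem_Ico] <;> omega
  obtain ⟨w⟩ := hG.isConnected y q
  obtain ⟨v₃, -, h3, h4⟩ := hf.2 y q hne' hint w.toPath w.toPath.isPath
  have h5 := (f v₃).hab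
  have h6 := hq v₃ (Finset.mem_univ v₃)
  change (f v₃).b ≤ (f q).b at h6
  omega
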